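/- The polynomial Q₂(T) is irreducible over ℚ, and there is no polynomial g ∈ ℤ[T] and no integer k ≥ 2 such that Q₂(T) = g(T^k). -/

import Mathlib

open Polynomial

set_option maxHeartbeats 1000000

/-- The Weil polynomial `Q₂(T) = Q₁(J(X)/𝔽₉, T)` of the intermediate Jacobian of the
cubic threefold `X` of the paper over `𝔽₉`. -/
noncomputable def weilQ2 : Polynomial ℤ :=
  X ^ 10 - 6 * X ^ 9 + 23 * X ^ 8 - 76 * X ^ 7 + 221 * X ^ 6 - 535 * X ^ 5
    + 1989 * X ^ 4 - 6156 * X ^ 3 + 16767 * X ^ 2 - 39366 * X + 59049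


-- ## Generic helper lemmas over a field

section Helpers
variable {k : Type*} [Field k]
open Polynomial

lemma notDvdOfRem {g f q r : k[X]} (h : f = g * q + r) (hr : r ≠ 0)
    (hdeg : r.degree < g.degree) : ¬ g ∣ f := by
  intro hdvd
  have hgr : g ∣ r := by
    have : r = f - g * q := by rw [h]; ring
    rw [this]
    exact dvd_sub hdvd (Dvd.intro q rfl)
  exact absurd (Polynomial.degree_le_of_dvd hgr hr) (not_le.mpr hdeg)

lemma dvdIrredMul {p q x : k[X]} (hp : Irreducible p) (hq : Irreducible q)
    (h : x ∣ p * q) :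
    x.natDegree = 0 ∨ x.natDegree = p.natDegree ∨ x.natDegree = q.natDegree ∨
      x.natDegree = p.natDegree + q.natDegree := by
  obtain ⟨y, hy⟩ := h
  have hp0 : p ≠ 0 := hp.ne_zero
  have hq0 : q ≠ 0 := hq.ne_zero
  have hpq0 : p * q ≠ 0 := mul_ne_zero hp0 hq0
  have hx0 : x ≠ 0 := by rintro rfl; rw [zero_mul] at hy; exact hpq0 hy
  have hy0 : y ≠ 0 := by rintro rfl; rw [mul_zero] at hy; exact hpq0 hy
  have hdvd : p ∣ x * y := hy ▸ dvd_mul_right p q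
  rcases hp.prime.dvd_or_dvd hdvd with hd | hd
  · obtain ⟨c, hc⟩ := hd
    have hc0 : c ≠ 0 := by rintro rfl; rw [mul_zero] at hc; exact hx0 hc
    have hqcy : q = c * y := by
      apply mul_left_cancel₀ hp0
      rw [hy, hc]; ring
    rcases hq.isUnit_or_isUnit hqcy with hu | hu
    · right; left
      rw [hc, natDegree_mul hp0 hc0, natDegree_eq_zero_of_isUnit hu, add_zero]
    · right; right; right
      have h2 : (p * q).natDegree = x.natDegree + y.natDegree := by
        rw [hy, natDegree_mul hx0 hy0]
      rw [natDegree_mul hp0 hq0, natDegree_eq_zero_of_isUnit hu] at h2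
      omega
  · obtain ⟨c, hc⟩ := hd
    have hc0 : c ≠ 0 := by rintro rfl; rw [mul_zero] at hc; exact hy0 hc
    have hqxc : q = x * c := by
      apply mul_left_cancel₀ hp0
      rw [hy, hc]; ring
    rcases hq.isUnit_or_isUnit hqxc with hu | hu
    · left; exact natDegree_eq_zero_of_isUnit hu
    · right; right; left
      have := congrArg natDegree hqxc
      rw [natDegree_mul hx0 hc0, natDegree_eq_zero_of_isUnit hu] at this
      omega

lemma dvdIrredMul3 {p q r x : k[X]} (hp : Irreducible p) (hq : Irreducible q)
    (hr : Irreducible r) (h : x ∣ p * (q * r)) :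
    x.natDegree = 0 ∨ x.natDegree = p.natDegree ∨ x.natDegree = q.natDegree ∨
      x.natDegree = r.natDegree ∨ x.natDegree = p.natDegree + q.natDegree ∨
      x.natDegree = p.natDegree + r.natDegree ∨ x.natDegree = q.natDegree + r.natDegree ∨
      x.natDegree = p.natDegree + q.natDegree + r.natDegree := by
  obtain ⟨y, hy⟩ := h
  have hp0 : p ≠ 0 := hp.ne_zero
  have hqr0 : q * r ≠ 0 := mul_ne_zero hq.ne_zero hr.ne_zero
  have hpqr0 : p * (q * r) ≠ 0 := mul_ne_zero hp0 hqr0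
  have hx0 : x ≠ 0 := by rintro rfl; rw [zero_mul] at hy; exact hpqr0 hy
  have hy0 : y ≠ 0 := by rintro rfl; rw [mul_zero] at hy; exact hpqr0 hy
  have hdvd : p ∣ x * y := hy ▸ dvd_mul_right p (q * r)
  rcases hp.prime.dvd_or_dvd hdvd with hd | hd
  · obtain ⟨c, hc⟩ := hd
    have hc0 : c ≠ 0 := by rintro rfl; rw [mul_zero] at hc; exact hx0 hc
    have hcy : q * r = c * y := by
      apply mul_left_cancel₀ hp0
      rw [hy, hc]; ring
    have hcd : c ∣ q * r := ⟨y, hcy⟩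
    have hxc : x.natDegree = p.natDegree + c.natDegree := by
      rw [hc, natDegree_mul hp0 hc0]
    rcases dvdIrredMul hq hr hcd with h1 | h1 | h1 | h1 <;> omega
  · obtain ⟨c, hc⟩ := hd
    have hc0 : c ≠ 0 := by rintro rfl; rw [mul_zero] at hc; exact hy0 hc
    have hcy : q * r = x * c := by
      apply mul_left_cancel₀ hp0
      rw [hy, hc]; ring
    have hxd : x ∣ q * r := ⟨c, hcy⟩
    rcases dvdIrredMul hq hr hxd with h1 | h1 | h1 | h1 <;> omega

lemma oneLeNatDegree {a : k[X]} (ha : a ≠ 0) (hu : ¬ IsUnit a) : 1 ≤ a.natDegree := by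
  by_contra hlt
  push_neg at hlt
  have h0 : a.natDegree = 0 := by omega
  exact hu (isUnit_iff_degree_eq_zero.mpr (by rw [degree_eq_natDegree ha, h0]; rfl))

lemma existsSmallFactor {f : k[X]} (hm : f.Monic) (hni : ¬ Irreducible f)
    (hd1 : 1 ≤ f.natDegree) :
    ∃ g : k[X], g.Monic ∧ g ∣ f ∧ 1 ≤ g.natDegree ∧ 2 * g.natDegree ≤ f.natDegree := by
  have hf0 : f ≠ 0 := hm.ne_zero
  have hfu : ¬ IsUnit f := by
    intro hu
    have := natDegree_eq_zero_of_isUnit hu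
    omega
  rw [irreducible_iff] at hni
  push_neg at hni
  obtain ⟨a, b, hab, hua, hub⟩ := hni hfu
  have ha0 : a ≠ 0 := by rintro rfl; simp at hab; exact hf0 hab
  have hb0 : b ≠ 0 := by rintro rfl; simp at hab; exact hf0 hab
  have hsum : a.natDegree + b.natDegree = f.natDegree := by
    rw [hab, natDegree_mul ha0 hb0]
  have h1a := oneLeNatDegree ha0 hua
  have h1b := oneLeNatDegree hb0 hub
  rcases le_or_gt a.natDegree b.natDegree with hle | hlt
  · refine ⟨a * C (a.leadingCoeff)⁻¹, monic_mul_leadingCoeff_inv ha0, ?_, ?_, ?_⟩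
    · exact ⟨C a.leadingCoeff * b, by
        rw [hab]
        rw [mul_assoc, ← mul_assoc (C a.leadingCoeff⁻¹), ← C_mul,
          inv_mul_cancel₀ (leadingCoeff_ne_zero.mpr ha0), C_1, one_mul]⟩
    · rw [natDegree_mul ha0 (C_ne_zero.mpr (inv_ne_zero (leadingCoeff_ne_zero.mpr ha0))),
        natDegree_C]
      omega
    · rw [natDegree_mul ha0 (C_ne_zero.mpr (inv_ne_zero (leadingCoeff_ne_zero.mpr ha0))),
        natDegree_C]
      omega
  · refine ⟨b * C (b.leadingCoeff)⁻¹, monic_mul_leadingCoeff_inv hb0, ?_, ?_, ?_⟩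
    · exact ⟨C b.leadingCoeff * a, by
        rw [hab]
        rw [mul_assoc, ← mul_assoc (C b.leadingCoeff⁻¹), ← C_mul,
          inv_mul_cancel₀ (leadingCoeff_ne_zero.mpr hb0), C_1, one_mul]
        ring⟩
    · rw [natDegree_mul hb0 (C_ne_zero.mpr (inv_ne_zero (leadingCoeff_ne_zero.mpr hb0))),
        natDegree_C]
      omega
    · rw [natDegree_mul hb0 (C_ne_zero.mpr (inv_ne_zero (leadingCoeff_ne_zero.mpr hb0))),
        natDegree_C]
      omega

lemma rootOfDvdRoot {f g : k[X]} (h : g ∣ f) {x : k} (hx : g.eval x = 0) :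
    f.eval x = 0 := by
  obtain ⟨t, rfl⟩ := h
  simp [hx]

lemma rootOfDeg1 {g : k[X]} (h : g.natDegree = 1) : ∃ x, g.eval x = 0 := by
  have hg := eq_X_add_C_of_natDegree_le_one h.le
  have h1 : g.coeff 1 ≠ 0 := by
    intro h0
    have : g.natDegree = 0 := by rw [hg, h0]; simp
    omega
  exact ⟨-(g.coeff 0) / g.coeff 1, by rw [eval_eq_sum_range, h]; simp [Finset.sum_range_succ]; field_simp; ring⟩

lemma monicDeg2Eq {g : k[X]} (hm : g.Monic) (h : g.natDegree = 2) :
    g = X ^ 2 + C (g.coeff 1) * X + C (g.coeff 0) := by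
  ext n
  have hlc := hm.coeff_natDegree
  rw [h] at hlc
  match n with
  | 0 => simp
  | 1 => simp
  | 2 => simp [hlc, coeff_X]
  | (m+3) =>
    rw [coeff_eq_zero_of_natDegree_lt (by omega)]
    simp [coeff_X, coeff_C]

lemma irreducibleOfDeg3 {f : k[X]} (hm : f.Monic) (hd : f.natDegree = 3)
    (hr : ∀ x, f.eval x ≠ 0) : Irreducible f := by
  by_contra hni
  obtain ⟨g, hgm, hgd, hg1, hg2⟩ := existsSmallFactor hm hni (by omega)
  have h1 : g.natDegree = 1 := by omega
  obtain ⟨x, hx⟩ := rootOfDeg1 h1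
  exact hr x (rootOfDvdRoot hgd hx)

lemma irreducibleOfCert {f : k[X]} (hm : f.Monic)
    (hd : f.natDegree = 4 ∨ f.natDegree = 5)
    (hr : ∀ x, f.eval x ≠ 0)
    (hq : ∀ b c : k, (∀ x, x ^ 2 + b * x + c ≠ 0) → ¬ (X ^ 2 + C b * X + C c ∣ f)) :
    Irreducible f := by
  by_contra hni
  obtain ⟨g, hgm, hgd, hg1, hg2⟩ := existsSmallFactor hm hni (by omega)
  have : g.natDegree = 1 ∨ g.natDegree = 2 := by omega
  rcases this with h1 | h2
  · obtain ⟨x, hx⟩ := rootOfDeg1 h1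
    exact hr x (rootOfDvdRoot hgd hx)
  · have hgeq := monicDeg2Eq hgm h2
    by_cases hex : ∃ x, x ^ 2 + g.coeff 1 * x + g.coeff 0 = 0
    · obtain ⟨x, hx⟩ := hex
      have : g.eval x = 0 := by rw [hgeq]; simpa using hx
      exact hr x (rootOfDvdRoot hgd this)
    · push_neg at hex
      exact hq (g.coeff 1) (g.coeff 0) hex (hgeq ▸ hgd)

end Helpers

-- ## Reduction maps

instance : Fact (Nat.Prime 5) := ⟨by norm_num⟩

abbrev φ5 : ℤ →+* ZMod 5 := Int.castRingHom (ZMod 5)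
abbrev φ2 : ℤ →+* ZMod 2 := Int.castRingHom (ZMod 2)

lemma fiveMapZero : (5 : ℤ[X]).map φ5 = 0 := by
  have h : (5 : ℤ[X]) = C 5 := by norm_num
  rw [h, map_C]
  have h2 : φ5 5 = 0 := by decide
  rw [h2, map_zero]

lemma twoMapZero : (2 : ℤ[X]).map φ2 = 0 := by
  have h : (2 : ℤ[X]) = C 2 := by norm_num
  rw [h, map_C]
  have h2 : φ2 2 = 0 := by decide
  rw [h2, map_zero]

lemma mapRem5 {f g q r s : ℤ[X]} (h : f = g * q + r + 5 * s) :
    f.map φ5 = g.map φ5 * q.map φ5 + r.map φ5 := by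
  rw [h]
  simp only [Polynomial.map_add, Polynomial.map_mul, fiveMapZero, zero_mul, add_zero]

lemma mapRem2 {f g q r s : ℤ[X]} (h : f = g * q + r + 2 * s) :
    f.map φ2 = g.map φ2 * q.map φ2 + r.map φ2 := by
  rw [h]
  simp only [Polynomial.map_add, Polynomial.map_mul, twoMapZero, zero_mul, add_zero]

lemma mapEq5 {f g s : ℤ[X]} (h : f = g + 5 * s) : f.map φ5 = g.map φ5 := by
  rw [h]
  simp only [Polynomial.map_add, Polynomial.map_mul, fiveMapZero, zero_mul, add_zero]

lemma mapEq2 {f g s : ℤ[X]} (h : f = g + 2 * s) : f.map φ2 = g.map φ2 := by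
  rw [h]
  simp only [Polynomial.map_add, Polynomial.map_mul, twoMapZero, zero_mul, add_zero]

-- ## The factors

noncomputable def AZ : ℤ[X] := X ^ 5 + 3 * X ^ 3 + X + 1
noncomputable def BZ : ℤ[X] := X ^ 5 + 4 * X ^ 4 + 2 * X ^ 2 + 4
noncomputable def CZ : ℤ[X] := X ^ 3 + X ^ 2 + 1
noncomputable def DZ : ℤ[X] := X ^ 3 + X + 1
noncomputable def EZ : ℤ[X] := X ^ 4 + X ^ 3 + X ^ 2 + X + 1

lemma AZmonic : AZ.Monic := by unfold AZ; monicity!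
lemma BZmonic : BZ.Monic := by unfold BZ; monicity!
lemma CZmonic : CZ.Monic := by unfold CZ; monicity!
lemma DZmonic : DZ.Monic := by unfold DZ; monicity!
lemma EZmonic : EZ.Monic := by unfold EZ; monicity!

lemma AbarDeg : (AZ.map φ5).natDegree = 5 := by
  rw [AZmonic.natDegree_map]; unfold AZ; compute_degree!
lemma BbarDeg : (BZ.map φ5).natDegree = 5 := by
  rw [BZmonic.natDegree_map]; unfold BZ; compute_degree!
lemma CbarDeg : (CZ.map φ2).natDegree = 3 := by
  rw [CZmonic.natDegree_map]; unfold CZ; compute_degree!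
lemma DbarDeg : (DZ.map φ2).natDegree = 3 := by
  rw [DZmonic.natDegree_map]; unfold DZ; compute_degree!
lemma EbarDeg : (EZ.map φ2).natDegree = 4 := by
  rw [EZmonic.natDegree_map]; unfold EZ; compute_degree!

lemma AbarEq : AZ.map φ5 = X ^ 5 + 3 * X ^ 3 + X + 1 := by
  unfold AZ
  simp [Polynomial.map_add, Polynomial.map_mul, Polynomial.map_pow, Polynomial.map_ofNat, map_ofNat]
lemma BbarEq : BZ.map φ5 = X ^ 5 + 4 * X ^ 4 + 2 * X ^ 2 + 4 := by
  unfold BZ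
  simp [Polynomial.map_add, Polynomial.map_mul, Polynomial.map_pow, Polynomial.map_ofNat, map_ofNat]
lemma CbarEq : CZ.map φ2 = X ^ 3 + X ^ 2 + 1 := by
  unfold CZ
  simp [Polynomial.map_add, Polynomial.map_mul, Polynomial.map_pow, Polynomial.map_ofNat, map_ofNat]
lemma DbarEq : DZ.map φ2 = X ^ 3 + X + 1 := by
  unfold DZ
  simp [Polynomial.map_add, Polynomial.map_mul, Polynomial.map_pow, Polynomial.map_ofNat, map_ofNat]
lemma EbarEq : EZ.map φ2 = X ^ 4 + X ^ 3 + X ^ 2 + X + 1 := by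
  unfold EZ
  simp [Polynomial.map_add, Polynomial.map_mul, Polynomial.map_pow, Polynomial.map_ofNat, map_ofNat]

lemma AbarRootFree : ∀ x : ZMod 5, (AZ.map φ5).eval x ≠ 0 := by
  rw [AbarEq]
  intro x
  simp only [eval_add, eval_mul, eval_pow, eval_X, eval_one, eval_ofNat]
  revert x
  decide
lemma BbarRootFree : ∀ x : ZMod 5, (BZ.map φ5).eval x ≠ 0 := by
  rw [BbarEq]
  intro x
  simp only [eval_add, eval_mul, eval_pow, eval_X, eval_one, eval_ofNat]
  revert x
  decide
lemma CbarRootFree : ∀ x : ZMod 2, (CZ.map φ2).eval x ≠ 0 := by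
  rw [CbarEq]
  intro x
  simp only [eval_add, eval_mul, eval_pow, eval_X, eval_one, eval_ofNat]
  revert x
  decide
lemma DbarRootFree : ∀ x : ZMod 2, (DZ.map φ2).eval x ≠ 0 := by
  rw [DbarEq]
  intro x
  simp only [eval_add, eval_mul, eval_pow, eval_X, eval_one, eval_ofNat]
  revert x
  decide
lemma EbarRootFree : ∀ x : ZMod 2, (EZ.map φ2).eval x ≠ 0 := by
  rw [EbarEq]
  intro x
  simp only [eval_add, eval_mul, eval_pow, eval_X, eval_one, eval_ofNat]
  revert x
  decide

-- ## Non-divisibility by irreducible quadratics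

lemma AZbarQuad : ∀ b c : ZMod 5, (∀ x, x ^ 2 + b * x + c ≠ 0) →
    ¬ (X ^ 2 + C b * X + C c ∣ AZ.map φ5) := by
  intro b c hrf
  have key : ∀ b c : ZMod 5, (∀ x, x ^ 2 + b * x + c ≠ 0) →
      (b = 0 ∧ c = 2) ∨ (b = 0 ∧ c = 3) ∨ (b = 1 ∧ c = 1) ∨ (b = 1 ∧ c = 2) ∨ (b = 2 ∧ c = 3) ∨ (b = 2 ∧ c = 4) ∨ (b = 3 ∧ c = 3) ∨ (b = 3 ∧ c = 4) ∨ (b = 4 ∧ c = 1) ∨ (b = 4 ∧ c = 2) := by decide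
  rcases key b c hrf with ⟨rfl, rfl⟩|⟨rfl, rfl⟩|⟨rfl, rfl⟩|⟨rfl, rfl⟩|⟨rfl, rfl⟩|⟨rfl, rfl⟩|⟨rfl, rfl⟩|⟨rfl, rfl⟩|⟨rfl, rfl⟩|⟨rfl, rfl⟩
  · have hg : (X ^ 2 + C (0 : ZMod 5) * X + C 2 : (ZMod 5)[X]) = (2 + X ^ 2 : ℤ[X]).map φ5 := by
      simp [Polynomial.map_add, Polynomial.map_mul, Polynomial.map_pow, Polynomial.map_ofNat, map_ofNat]
      <;> ring
    have h5 : AZ = (2 + X ^ 2) * (X + X ^ 3) + (1 + 4 * X) + 5 * ((-1) * X) := by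
      unfold AZ; ring
    refine notDvdOfRem (f := AZ.map φ5) (q := (X + X ^ 3 : ℤ[X]).map φ5)
      (r := (1 + 4 * X : ℤ[X]).map φ5) (by rw [hg]; exact mapRem5 h5) ?_ ?_
    · have hr : ((1 + 4 * X : ℤ[X]).map φ5) = 1 + 4 * X := by
        simp [Polynomial.map_add, Polynomial.map_mul, Polynomial.map_pow, Polynomial.map_ofNat, map_ofNat]
          <;> ring
      rw [hr]
      intro h0
      have h2 := congrArg (eval 0) h0
      simp only [eval_add, eval_mul, eval_X, eval_one, eval_pow, eval_ofNat, eval_zero] at h2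
      exact absurd h2 (by decide)
    · have hr : ((1 + 4 * X : ℤ[X]).map φ5) = 1 + 4 * X := by
        simp [Polynomial.map_add, Polynomial.map_mul, Polynomial.map_pow, Polynomial.map_ofNat, map_ofNat]
          <;> ring
      rw [hr]
      have h2 : (1 + 4 * X : (ZMod 5)[X]).degree ≤ 1 := by compute_degree!
      have h3 : (X ^ 2 + C (0 : ZMod 5) * X + C 2 : (ZMod 5)[X]).degree = 2 := by
        compute_degree!
      rw [h3]
      exact lt_of_le_of_lt h2 (by decide)
  · have hg : (X ^ 2 + C (0 : ZMod 5) * X + C 3 : (ZMod 5)[X]) = (3 + X ^ 2 : ℤ[X]).map φ5 := by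
      simp [Polynomial.map_add, Polynomial.map_mul, Polynomial.map_pow, Polynomial.map_ofNat, map_ofNat]
      <;> ring
    have h5 : AZ = (3 + X ^ 2) * (X ^ 3) + (1 + X) + 5 * (0) := by
      unfold AZ; ring
    refine notDvdOfRem (f := AZ.map φ5) (q := (X ^ 3 : ℤ[X]).map φ5)
      (r := (1 + X : ℤ[X]).map φ5) (by rw [hg]; exact mapRem5 h5) ?_ ?_
    · have hr : ((1 + X : ℤ[X]).map φ5) = 1 + X := by
        simp [Polynomial.map_add, Polynomial.map_mul, Polynomial.map_pow, Polynomial.map_ofNat, map_ofNat]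
          <;> ring
      rw [hr]
      intro h0
      have h2 := congrArg (eval 0) h0
      simp only [eval_add, eval_mul, eval_X, eval_one, eval_pow, eval_ofNat, eval_zero] at h2
      exact absurd h2 (by decide)
    · have hr : ((1 + X : ℤ[X]).map φ5) = 1 + X := by
        simp [Polynomial.map_add, Polynomial.map_mul, Polynomial.map_pow, Polynomial.map_ofNat, map_ofNat]
          <;> ring
      rw [hr]
      have h2 : (1 + X : (ZMod 5)[X]).degree ≤ 1 := by compute_degree!
      have h3 : (X ^ 2 + C (0 : ZMod 5) * X + C 3 : (ZMod 5)[X]).degree = 2 := by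
        compute_degree!
      rw [h3]
      exact lt_of_le_of_lt h2 (by decide)
  · have hg : (X ^ 2 + C (1 : ZMod 5) * X + C 1 : (ZMod 5)[X]) = (1 + X + X ^ 2 : ℤ[X]).map φ5 := by
      simp [Polynomial.map_add, Polynomial.map_mul, Polynomial.map_pow, Polynomial.map_ofNat, map_ofNat]
      <;> ring
    have h5 : AZ = (1 + X + X ^ 2) * (3 + 3 * X + 4 * X ^ 2 + X ^ 3) + (3) + 5 * ((-1) + (-1) * X + (-2) * X ^ 2 + (-1) * X ^ 3 + (-1) * X ^ 4) := by
      unfold AZ; ring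
    refine notDvdOfRem (f := AZ.map φ5) (q := (3 + 3 * X + 4 * X ^ 2 + X ^ 3 : ℤ[X]).map φ5)
      (r := (3 : ℤ[X]).map φ5) (by rw [hg]; exact mapRem5 h5) ?_ ?_
    · have hr : ((3 : ℤ[X]).map φ5) = 3 := by
        simp [Polynomial.map_add, Polynomial.map_mul, Polynomial.map_pow, Polynomial.map_ofNat, map_ofNat]
          <;> ring
      rw [hr]
      intro h0
      have h2 := congrArg (eval 0) h0
      simp only [eval_add, eval_mul, eval_X, eval_one, eval_pow, eval_ofNat, eval_zero] at h2
      exact absurd h2 (by decide)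
    · have hr : ((3 : ℤ[X]).map φ5) = 3 := by
        simp [Polynomial.map_add, Polynomial.map_mul, Polynomial.map_pow, Polynomial.map_ofNat, map_ofNat]
          <;> ring
      rw [hr]
      have h2 : (3 : (ZMod 5)[X]).degree ≤ 1 := by compute_degree!
      have h3 : (X ^ 2 + C (1 : ZMod 5) * X + C 1 : (ZMod 5)[X]).degree = 2 := by
        compute_degree!
      rw [h3]
      exact lt_of_le_of_lt h2 (by decide)
  · have hg : (X ^ 2 + C (1 : ZMod 5) * X + C 2 : (ZMod 5)[X]) = (2 + X + X ^ 2 : ℤ[X]).map φ5 := by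
      simp [Polynomial.map_add, Polynomial.map_mul, Polynomial.map_pow, Polynomial.map_ofNat, map_ofNat]
      <;> ring
    have h5 : AZ = (2 + X + X ^ 2) * (2 * X + 4 * X ^ 2 + X ^ 3) + (1 + 2 * X) + 5 * ((-1) * X + (-2) * X ^ 2 + (-1) * X ^ 3 + (-1) * X ^ 4) := by
      unfold AZ; ring
    refine notDvdOfRem (f := AZ.map φ5) (q := (2 * X + 4 * X ^ 2 + X ^ 3 : ℤ[X]).map φ5)
      (r := (1 + 2 * X : ℤ[X]).map φ5) (by rw [hg]; exact mapRem5 h5) ?_ ?_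
    · have hr : ((1 + 2 * X : ℤ[X]).map φ5) = 1 + 2 * X := by
        simp [Polynomial.map_add, Polynomial.map_mul, Polynomial.map_pow, Polynomial.map_ofNat, map_ofNat]
          <;> ring
      rw [hr]
      intro h0
      have h2 := congrArg (eval 0) h0
      simp only [eval_add, eval_mul, eval_X, eval_one, eval_pow, eval_ofNat, eval_zero] at h2
      exact absurd h2 (by decide)
    · have hr : ((1 + 2 * X : ℤ[X]).map φ5) = 1 + 2 * X := by
        simp [Polynomial.map_add, Polynomial.map_mul, Polynomial.map_pow, Polynomial.map_ofNat, map_ofNat]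
          <;> ring
      rw [hr]
      have h2 : (1 + 2 * X : (ZMod 5)[X]).degree ≤ 1 := by compute_degree!
      have h3 : (X ^ 2 + C (1 : ZMod 5) * X + C 2 : (ZMod 5)[X]).degree = 2 := by
        compute_degree!
      rw [h3]
      exact lt_of_le_of_lt h2 (by decide)
  · have hg : (X ^ 2 + C (2 : ZMod 5) * X + C 3 : (ZMod 5)[X]) = (3 + 2 * X + X ^ 2 : ℤ[X]).map φ5 := by
      simp [Polynomial.map_add, Polynomial.map_mul, Polynomial.map_pow, Polynomial.map_ofNat, map_ofNat]
      <;> ring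
    have h5 : AZ = (3 + 2 * X + X ^ 2) * (3 + 4 * X + 3 * X ^ 2 + X ^ 3) + (2 + 3 * X) + 5 * ((-2) + (-4) * X + (-4) * X ^ 2 + (-2) * X ^ 3 + (-1) * X ^ 4) := by
      unfold AZ; ring
    refine notDvdOfRem (f := AZ.map φ5) (q := (3 + 4 * X + 3 * X ^ 2 + X ^ 3 : ℤ[X]).map φ5)
      (r := (2 + 3 * X : ℤ[X]).map φ5) (by rw [hg]; exact mapRem5 h5) ?_ ?_
    · have hr : ((2 + 3 * X : ℤ[X]).map φ5) = 2 + 3 * X := by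
        simp [Polynomial.map_add, Polynomial.map_mul, Polynomial.map_pow, Polynomial.map_ofNat, map_ofNat]
          <;> ring
      rw [hr]
      intro h0
      have h2 := congrArg (eval 0) h0
      simp only [eval_add, eval_mul, eval_X, eval_one, eval_pow, eval_ofNat, eval_zero] at h2
      exact absurd h2 (by decide)
    · have hr : ((2 + 3 * X : ℤ[X]).map φ5) = 2 + 3 * X := by
        simp [Polynomial.map_add, Polynomial.map_mul, Polynomial.map_pow, Polynomial.map_ofNat, map_ofNat]
          <;> ring
      rw [hr]
      have h2 : (2 + 3 * X : (ZMod 5)[X]).degree ≤ 1 := by compute_degree!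
      have h3 : (X ^ 2 + C (2 : ZMod 5) * X + C 3 : (ZMod 5)[X]).degree = 2 := by
        compute_degree!
      rw [h3]
      exact lt_of_le_of_lt h2 (by decide)
  · have hg : (X ^ 2 + C (2 : ZMod 5) * X + C 4 : (ZMod 5)[X]) = (4 + 2 * X + X ^ 2 : ℤ[X]).map φ5 := by
      simp [Polynomial.map_add, Polynomial.map_mul, Polynomial.map_pow, Polynomial.map_ofNat, map_ofNat]
      <;> ring
    have h5 : AZ = (4 + 2 * X + X ^ 2) * (2 + 3 * X + 3 * X ^ 2 + X ^ 3) + (3) + 5 * ((-2) + (-3) * X + (-4) * X ^ 2 + (-2) * X ^ 3 + (-1) * X ^ 4) := by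
      unfold AZ; ring
    refine notDvdOfRem (f := AZ.map φ5) (q := (2 + 3 * X + 3 * X ^ 2 + X ^ 3 : ℤ[X]).map φ5)
      (r := (3 : ℤ[X]).map φ5) (by rw [hg]; exact mapRem5 h5) ?_ ?_
    · have hr : ((3 : ℤ[X]).map φ5) = 3 := by
        simp [Polynomial.map_add, Polynomial.map_mul, Polynomial.map_pow, Polynomial.map_ofNat, map_ofNat]
          <;> ring
      rw [hr]
      intro h0
      have h2 := congrArg (eval 0) h0
      simp only [eval_add, eval_mul, eval_X, eval_one, eval_pow, eval_ofNat, eval_zero] at h2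
      exact absurd h2 (by decide)
    · have hr : ((3 : ℤ[X]).map φ5) = 3 := by
        simp [Polynomial.map_add, Polynomial.map_mul, Polynomial.map_pow, Polynomial.map_ofNat, map_ofNat]
          <;> ring
      rw [hr]
      have h2 : (3 : (ZMod 5)[X]).degree ≤ 1 := by compute_degree!
      have h3 : (X ^ 2 + C (2 : ZMod 5) * X + C 4 : (ZMod 5)[X]).degree = 2 := by
        compute_degree!
      rw [h3]
      exact lt_of_le_of_lt h2 (by decide)
  · have hg : (X ^ 2 + C (3 : ZMod 5) * X + C 3 : (ZMod 5)[X]) = (3 + 3 * X + X ^ 2 : ℤ[X]).map φ5 := by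
      simp [Polynomial.map_add, Polynomial.map_mul, Polynomial.map_pow, Polynomial.map_ofNat, map_ofNat]
      <;> ring
    have h5 : AZ = (3 + 3 * X + X ^ 2) * (2 + 4 * X + 2 * X ^ 2 + X ^ 3) + (3 * X) + 5 * ((-1) + (-4) * X + (-4) * X ^ 2 + (-2) * X ^ 3 + (-1) * X ^ 4) := by
      unfold AZ; ring
    refine notDvdOfRem (f := AZ.map φ5) (q := (2 + 4 * X + 2 * X ^ 2 + X ^ 3 : ℤ[X]).map φ5)
      (r := (3 * X : ℤ[X]).map φ5) (by rw [hg]; exact mapRem5 h5) ?_ ?_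
    · have hr : ((3 * X : ℤ[X]).map φ5) = 3 * X := by
        simp [Polynomial.map_add, Polynomial.map_mul, Polynomial.map_pow, Polynomial.map_ofNat, map_ofNat]
          <;> ring
      rw [hr]
      intro h0
      have h2 := congrArg (eval 1) h0
      simp only [eval_add, eval_mul, eval_X, eval_one, eval_pow, eval_ofNat, eval_zero] at h2
      exact absurd h2 (by decide)
    · have hr : ((3 * X : ℤ[X]).map φ5) = 3 * X := by
        simp [Polynomial.map_add, Polynomial.map_mul, Polynomial.map_pow, Polynomial.map_ofNat, map_ofNat]
          <;> ring
      rw [hr]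
      have h2 : (3 * X : (ZMod 5)[X]).degree ≤ 1 := by compute_degree!
      have h3 : (X ^ 2 + C (3 : ZMod 5) * X + C 3 : (ZMod 5)[X]).degree = 2 := by
        compute_degree!
      rw [h3]
      exact lt_of_le_of_lt h2 (by decide)
  · have hg : (X ^ 2 + C (3 : ZMod 5) * X + C 4 : (ZMod 5)[X]) = (4 + 3 * X + X ^ 2 : ℤ[X]).map φ5 := by
      simp [Polynomial.map_add, Polynomial.map_mul, Polynomial.map_pow, Polynomial.map_ofNat, map_ofNat]
      <;> ring
    have h5 : AZ = (4 + 3 * X + X ^ 2) * (3 + 3 * X + 2 * X ^ 2 + X ^ 3) + (4) + 5 * ((-3) + (-4) * X + (-4) * X ^ 2 + (-2) * X ^ 3 + (-1) * X ^ 4) := by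
      unfold AZ; ring
    refine notDvdOfRem (f := AZ.map φ5) (q := (3 + 3 * X + 2 * X ^ 2 + X ^ 3 : ℤ[X]).map φ5)
      (r := (4 : ℤ[X]).map φ5) (by rw [hg]; exact mapRem5 h5) ?_ ?_
    · have hr : ((4 : ℤ[X]).map φ5) = 4 := by
        simp [Polynomial.map_add, Polynomial.map_mul, Polynomial.map_pow, Polynomial.map_ofNat, map_ofNat]
          <;> ring
      rw [hr]
      intro h0
      have h2 := congrArg (eval 0) h0
      simp only [eval_add, eval_mul, eval_X, eval_one, eval_pow, eval_ofNat, eval_zero] at h2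
      exact absurd h2 (by decide)
    · have hr : ((4 : ℤ[X]).map φ5) = 4 := by
        simp [Polynomial.map_add, Polynomial.map_mul, Polynomial.map_pow, Polynomial.map_ofNat, map_ofNat]
          <;> ring
      rw [hr]
      have h2 : (4 : (ZMod 5)[X]).degree ≤ 1 := by compute_degree!
      have h3 : (X ^ 2 + C (3 : ZMod 5) * X + C 4 : (ZMod 5)[X]).degree = 2 := by
        compute_degree!
      rw [h3]
      exact lt_of_le_of_lt h2 (by decide)
  · have hg : (X ^ 2 + C (4 : ZMod 5) * X + C 1 : (ZMod 5)[X]) = (1 + 4 * X + X ^ 2 : ℤ[X]).map φ5 := by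
      simp [Polynomial.map_add, Polynomial.map_mul, Polynomial.map_pow, Polynomial.map_ofNat, map_ofNat]
      <;> ring
    have h5 : AZ = (1 + 4 * X + X ^ 2) * (2 + 3 * X + X ^ 2 + X ^ 3) + (4) + 5 * ((-1) + (-2) * X + (-3) * X ^ 2 + (-1) * X ^ 3 + (-1) * X ^ 4) := by
      unfold AZ; ring
    refine notDvdOfRem (f := AZ.map φ5) (q := (2 + 3 * X + X ^ 2 + X ^ 3 : ℤ[X]).map φ5)
      (r := (4 : ℤ[X]).map φ5) (by rw [hg]; exact mapRem5 h5) ?_ ?_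
    · have hr : ((4 : ℤ[X]).map φ5) = 4 := by
        simp [Polynomial.map_add, Polynomial.map_mul, Polynomial.map_pow, Polynomial.map_ofNat, map_ofNat]
          <;> ring
      rw [hr]
      intro h0
      have h2 := congrArg (eval 0) h0
      simp only [eval_add, eval_mul, eval_X, eval_one, eval_pow, eval_ofNat, eval_zero] at h2
      exact absurd h2 (by decide)
    · have hr : ((4 : ℤ[X]).map φ5) = 4 := by
        simp [Polynomial.map_add, Polynomial.map_mul, Polynomial.map_pow, Polynomial.map_ofNat, map_ofNat]
          <;> ring
      rw [hr]
      have h2 : (4 : (ZMod 5)[X]).degree ≤ 1 := by compute_degree!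
      have h3 : (X ^ 2 + C (4 : ZMod 5) * X + C 1 : (ZMod 5)[X]).degree = 2 := by
        compute_degree!
      rw [h3]
      exact lt_of_le_of_lt h2 (by decide)
  · have hg : (X ^ 2 + C (4 : ZMod 5) * X + C 2 : (ZMod 5)[X]) = (2 + 4 * X + X ^ 2 : ℤ[X]).map φ5 := by
      simp [Polynomial.map_add, Polynomial.map_mul, Polynomial.map_pow, Polynomial.map_ofNat, map_ofNat]
      <;> ring
    have h5 : AZ = (2 + 4 * X + X ^ 2) * (2 * X + X ^ 2 + X ^ 3) + (1 + 2 * X) + 5 * ((-1) * X + (-2) * X ^ 2 + (-1) * X ^ 3 + (-1) * X ^ 4) := by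
      unfold AZ; ring
    refine notDvdOfRem (f := AZ.map φ5) (q := (2 * X + X ^ 2 + X ^ 3 : ℤ[X]).map φ5)
      (r := (1 + 2 * X : ℤ[X]).map φ5) (by rw [hg]; exact mapRem5 h5) ?_ ?_
    · have hr : ((1 + 2 * X : ℤ[X]).map φ5) = 1 + 2 * X := by
        simp [Polynomial.map_add, Polynomial.map_mul, Polynomial.map_pow, Polynomial.map_ofNat, map_ofNat]
          <;> ring
      rw [hr]
      intro h0
      have h2 := congrArg (eval 0) h0
      simp only [eval_add, eval_mul, eval_X, eval_one, eval_pow, eval_ofNat, eval_zero] at h2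
      exact absurd h2 (by decide)
    · have hr : ((1 + 2 * X : ℤ[X]).map φ5) = 1 + 2 * X := by
        simp [Polynomial.map_add, Polynomial.map_mul, Polynomial.map_pow, Polynomial.map_ofNat, map_ofNat]
          <;> ring
      rw [hr]
      have h2 : (1 + 2 * X : (ZMod 5)[X]).degree ≤ 1 := by compute_degree!
      have h3 : (X ^ 2 + C (4 : ZMod 5) * X + C 2 : (ZMod 5)[X]).degree = 2 := by
        compute_degree!
      rw [h3]
      exact lt_of_le_of_lt h2 (by decide)

lemma BZbarQuad : ∀ b c : ZMod 5, (∀ x, x ^ 2 + b * x + c ≠ 0) →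
    ¬ (X ^ 2 + C b * X + C c ∣ BZ.map φ5) := by
  intro b c hrf
  have key : ∀ b c : ZMod 5, (∀ x, x ^ 2 + b * x + c ≠ 0) →
      (b = 0 ∧ c = 2) ∨ (b = 0 ∧ c = 3) ∨ (b = 1 ∧ c = 1) ∨ (b = 1 ∧ c = 2) ∨ (b = 2 ∧ c = 3) ∨ (b = 2 ∧ c = 4) ∨ (b = 3 ∧ c = 3) ∨ (b = 3 ∧ c = 4) ∨ (b = 4 ∧ c = 1) ∨ (b = 4 ∧ c = 2) := by decide
  rcases key b c hrf with ⟨rfl, rfl⟩|⟨rfl, rfl⟩|⟨rfl, rfl⟩|⟨rfl, rfl⟩|⟨rfl, rfl⟩|⟨rfl, rfl⟩|⟨rfl, rfl⟩|⟨rfl, rfl⟩|⟨rfl, rfl⟩|⟨rfl, rfl⟩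
  · have hg : (X ^ 2 + C (0 : ZMod 5) * X + C 2 : (ZMod 5)[X]) = (2 + X ^ 2 : ℤ[X]).map φ5 := by
      simp [Polynomial.map_add, Polynomial.map_mul, Polynomial.map_pow, Polynomial.map_ofNat, map_ofNat]
      <;> ring
    have h5 : BZ = (2 + X ^ 2) * (4 + 3 * X + 4 * X ^ 2 + X ^ 3) + (1 + 4 * X) + 5 * ((-1) + (-2) * X + (-2) * X ^ 2 + (-1) * X ^ 3) := by
      unfold BZ; ring
    refine notDvdOfRem (f := BZ.map φ5) (q := (4 + 3 * X + 4 * X ^ 2 + X ^ 3 : ℤ[X]).map φ5)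
      (r := (1 + 4 * X : ℤ[X]).map φ5) (by rw [hg]; exact mapRem5 h5) ?_ ?_
    · have hr : ((1 + 4 * X : ℤ[X]).map φ5) = 1 + 4 * X := by
        simp [Polynomial.map_add, Polynomial.map_mul, Polynomial.map_pow, Polynomial.map_ofNat, map_ofNat]
          <;> ring
      rw [hr]
      intro h0
      have h2 := congrArg (eval 0) h0
      simp only [eval_add, eval_mul, eval_X, eval_one, eval_pow, eval_ofNat, eval_zero] at h2
      exact absurd h2 (by decide)
    · have hr : ((1 + 4 * X : ℤ[X]).map φ5) = 1 + 4 * X := by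
        simp [Polynomial.map_add, Polynomial.map_mul, Polynomial.map_pow, Polynomial.map_ofNat, map_ofNat]
          <;> ring
      rw [hr]
      have h2 : (1 + 4 * X : (ZMod 5)[X]).degree ≤ 1 := by compute_degree!
      have h3 : (X ^ 2 + C (0 : ZMod 5) * X + C 2 : (ZMod 5)[X]).degree = 2 := by
        compute_degree!
      rw [h3]
      exact lt_of_le_of_lt h2 (by decide)
  · have hg : (X ^ 2 + C (0 : ZMod 5) * X + C 3 : (ZMod 5)[X]) = (3 + X ^ 2 : ℤ[X]).map φ5 := by
      simp [Polynomial.map_add, Polynomial.map_mul, Polynomial.map_pow, Polynomial.map_ofNat, map_ofNat]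
      <;> ring
    have h5 : BZ = (3 + X ^ 2) * (2 * X + 4 * X ^ 2 + X ^ 3) + (4 + 4 * X) + 5 * ((-2) * X + (-2) * X ^ 2 + (-1) * X ^ 3) := by
      unfold BZ; ring
    refine notDvdOfRem (f := BZ.map φ5) (q := (2 * X + 4 * X ^ 2 + X ^ 3 : ℤ[X]).map φ5)
      (r := (4 + 4 * X : ℤ[X]).map φ5) (by rw [hg]; exact mapRem5 h5) ?_ ?_
    · have hr : ((4 + 4 * X : ℤ[X]).map φ5) = 4 + 4 * X := by
        simp [Polynomial.map_add, Polynomial.map_mul, Polynomial.map_pow, Polynomial.map_ofNat, map_ofNat]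
          <;> ring
      rw [hr]
      intro h0
      have h2 := congrArg (eval 0) h0
      simp only [eval_add, eval_mul, eval_X, eval_one, eval_pow, eval_ofNat, eval_zero] at h2
      exact absurd h2 (by decide)
    · have hr : ((4 + 4 * X : ℤ[X]).map φ5) = 4 + 4 * X := by
        simp [Polynomial.map_add, Polynomial.map_mul, Polynomial.map_pow, Polynomial.map_ofNat, map_ofNat]
          <;> ring
      rw [hr]
      have h2 : (4 + 4 * X : (ZMod 5)[X]).degree ≤ 1 := by compute_degree!
      have h3 : (X ^ 2 + C (0 : ZMod 5) * X + C 3 : (ZMod 5)[X]).degree = 2 := by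
        compute_degree!
      rw [h3]
      exact lt_of_le_of_lt h2 (by decide)
  · have hg : (X ^ 2 + C (1 : ZMod 5) * X + C 1 : (ZMod 5)[X]) = (1 + X + X ^ 2 : ℤ[X]).map φ5 := by
      simp [Polynomial.map_add, Polynomial.map_mul, Polynomial.map_pow, Polynomial.map_ofNat, map_ofNat]
      <;> ring
    have h5 : BZ = (1 + X + X ^ 2) * (3 + X + 3 * X ^ 2 + X ^ 3) + (1 + X) + 5 * ((-1) * X + (-1) * X ^ 2 + (-1) * X ^ 3) := by
      unfold BZ; ring
    refine notDvdOfRem (f := BZ.map φ5) (q := (3 + X + 3 * X ^ 2 + X ^ 3 : ℤ[X]).map φ5)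
      (r := (1 + X : ℤ[X]).map φ5) (by rw [hg]; exact mapRem5 h5) ?_ ?_
    · have hr : ((1 + X : ℤ[X]).map φ5) = 1 + X := by
        simp [Polynomial.map_add, Polynomial.map_mul, Polynomial.map_pow, Polynomial.map_ofNat, map_ofNat]
          <;> ring
      rw [hr]
      intro h0
      have h2 := congrArg (eval 0) h0
      simp only [eval_add, eval_mul, eval_X, eval_one, eval_pow, eval_ofNat, eval_zero] at h2
      exact absurd h2 (by decide)
    · have hr : ((1 + X : ℤ[X]).map φ5) = 1 + X := by
        simp [Polynomial.map_add, Polynomial.map_mul, Polynomial.map_pow, Polynomial.map_ofNat, map_ofNat]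
          <;> ring
      rw [hr]
      have h2 : (1 + X : (ZMod 5)[X]).degree ≤ 1 := by compute_degree!
      have h3 : (X ^ 2 + C (1 : ZMod 5) * X + C 1 : (ZMod 5)[X]).degree = 2 := by
        compute_degree!
      rw [h3]
      exact lt_of_le_of_lt h2 (by decide)
  · have hg : (X ^ 2 + C (1 : ZMod 5) * X + C 2 : (ZMod 5)[X]) = (2 + X + X ^ 2 : ℤ[X]).map φ5 := by
      simp [Polynomial.map_add, Polynomial.map_mul, Polynomial.map_pow, Polynomial.map_ofNat, map_ofNat]
      <;> ring
    have h5 : BZ = (2 + X + X ^ 2) * (1 + 3 * X ^ 2 + X ^ 3) + (2 + 4 * X) + 5 * ((-1) * X + (-1) * X ^ 2 + (-1) * X ^ 3) := by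
      unfold BZ; ring
    refine notDvdOfRem (f := BZ.map φ5) (q := (1 + 3 * X ^ 2 + X ^ 3 : ℤ[X]).map φ5)
      (r := (2 + 4 * X : ℤ[X]).map φ5) (by rw [hg]; exact mapRem5 h5) ?_ ?_
    · have hr : ((2 + 4 * X : ℤ[X]).map φ5) = 2 + 4 * X := by
        simp [Polynomial.map_add, Polynomial.map_mul, Polynomial.map_pow, Polynomial.map_ofNat, map_ofNat]
          <;> ring
      rw [hr]
      intro h0
      have h2 := congrArg (eval 0) h0
      simp only [eval_add, eval_mul, eval_X, eval_one, eval_pow, eval_ofNat, eval_zero] at h2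
      exact absurd h2 (by decide)
    · have hr : ((2 + 4 * X : ℤ[X]).map φ5) = 2 + 4 * X := by
        simp [Polynomial.map_add, Polynomial.map_mul, Polynomial.map_pow, Polynomial.map_ofNat, map_ofNat]
          <;> ring
      rw [hr]
      have h2 : (2 + 4 * X : (ZMod 5)[X]).degree ≤ 1 := by compute_degree!
      have h3 : (X ^ 2 + C (1 : ZMod 5) * X + C 2 : (ZMod 5)[X]).degree = 2 := by
        compute_degree!
      rw [h3]
      exact lt_of_le_of_lt h2 (by decide)
  · have hg : (X ^ 2 + C (2 : ZMod 5) * X + C 3 : (ZMod 5)[X]) = (3 + 2 * X + X ^ 2 : ℤ[X]).map φ5 := by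
      simp [Polynomial.map_add, Polynomial.map_mul, Polynomial.map_pow, Polynomial.map_ofNat, map_ofNat]
      <;> ring
    have h5 : BZ = (3 + 2 * X + X ^ 2) * (3 * X + 2 * X ^ 2 + X ^ 3) + (4 + X) + 5 * ((-2) * X + (-2) * X ^ 2 + (-2) * X ^ 3) := by
      unfold BZ; ring
    refine notDvdOfRem (f := BZ.map φ5) (q := (3 * X + 2 * X ^ 2 + X ^ 3 : ℤ[X]).map φ5)
      (r := (4 + X : ℤ[X]).map φ5) (by rw [hg]; exact mapRem5 h5) ?_ ?_
    · have hr : ((4 + X : ℤ[X]).map φ5) = 4 + X := by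
        simp [Polynomial.map_add, Polynomial.map_mul, Polynomial.map_pow, Polynomial.map_ofNat, map_ofNat]
          <;> ring
      rw [hr]
      intro h0
      have h2 := congrArg (eval 0) h0
      simp only [eval_add, eval_mul, eval_X, eval_one, eval_pow, eval_ofNat, eval_zero] at h2
      exact absurd h2 (by decide)
    · have hr : ((4 + X : ℤ[X]).map φ5) = 4 + X := by
        simp [Polynomial.map_add, Polynomial.map_mul, Polynomial.map_pow, Polynomial.map_ofNat, map_ofNat]
          <;> ring
      rw [hr]
      have h2 : (4 + X : (ZMod 5)[X]).degree ≤ 1 := by compute_degree!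
      have h3 : (X ^ 2 + C (2 : ZMod 5) * X + C 3 : (ZMod 5)[X]).degree = 2 := by
        compute_degree!
      rw [h3]
      exact lt_of_le_of_lt h2 (by decide)
  · have hg : (X ^ 2 + C (2 : ZMod 5) * X + C 4 : (ZMod 5)[X]) = (4 + 2 * X + X ^ 2 : ℤ[X]).map φ5 := by
      simp [Polynomial.map_add, Polynomial.map_mul, Polynomial.map_pow, Polynomial.map_ofNat, map_ofNat]
      <;> ring
    have h5 : BZ = (4 + 2 * X + X ^ 2) * (2 * X + 2 * X ^ 2 + X ^ 3) + (4 + 2 * X) + 5 * ((-2) * X + (-2) * X ^ 2 + (-2) * X ^ 3) := by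
      unfold BZ; ring
    refine notDvdOfRem (f := BZ.map φ5) (q := (2 * X + 2 * X ^ 2 + X ^ 3 : ℤ[X]).map φ5)
      (r := (4 + 2 * X : ℤ[X]).map φ5) (by rw [hg]; exact mapRem5 h5) ?_ ?_
    · have hr : ((4 + 2 * X : ℤ[X]).map φ5) = 4 + 2 * X := by
        simp [Polynomial.map_add, Polynomial.map_mul, Polynomial.map_pow, Polynomial.map_ofNat, map_ofNat]
          <;> ring
      rw [hr]
      intro h0
      have h2 := congrArg (eval 0) h0
      simp only [eval_add, eval_mul, eval_X, eval_one, eval_pow, eval_ofNat, eval_zero] at h2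
      exact absurd h2 (by decide)
    · have hr : ((4 + 2 * X : ℤ[X]).map φ5) = 4 + 2 * X := by
        simp [Polynomial.map_add, Polynomial.map_mul, Polynomial.map_pow, Polynomial.map_ofNat, map_ofNat]
          <;> ring
      rw [hr]
      have h2 : (4 + 2 * X : (ZMod 5)[X]).degree ≤ 1 := by compute_degree!
      have h3 : (X ^ 2 + C (2 : ZMod 5) * X + C 4 : (ZMod 5)[X]).degree = 2 := by
        compute_degree!
      rw [h3]
      exact lt_of_le_of_lt h2 (by decide)
  · have hg : (X ^ 2 + C (3 : ZMod 5) * X + C 3 : (ZMod 5)[X]) = (3 + 3 * X + X ^ 2 : ℤ[X]).map φ5 := by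
      simp [Polynomial.map_add, Polynomial.map_mul, Polynomial.map_pow, Polynomial.map_ofNat, map_ofNat]
      <;> ring
    have h5 : BZ = (3 + 3 * X + X ^ 2) * (2 + 4 * X + X ^ 2 + X ^ 3) + (3 + 2 * X) + 5 * ((-1) + (-4) * X + (-3) * X ^ 2 + (-2) * X ^ 3) := by
      unfold BZ; ring
    refine notDvdOfRem (f := BZ.map φ5) (q := (2 + 4 * X + X ^ 2 + X ^ 3 : ℤ[X]).map φ5)
      (r := (3 + 2 * X : ℤ[X]).map φ5) (by rw [hg]; exact mapRem5 h5) ?_ ?_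
    · have hr : ((3 + 2 * X : ℤ[X]).map φ5) = 3 + 2 * X := by
        simp [Polynomial.map_add, Polynomial.map_mul, Polynomial.map_pow, Polynomial.map_ofNat, map_ofNat]
          <;> ring
      rw [hr]
      intro h0
      have h2 := congrArg (eval 0) h0
      simp only [eval_add, eval_mul, eval_X, eval_one, eval_pow, eval_ofNat, eval_zero] at h2
      exact absurd h2 (by decide)
    · have hr : ((3 + 2 * X : ℤ[X]).map φ5) = 3 + 2 * X := by
        simp [Polynomial.map_add, Polynomial.map_mul, Polynomial.map_pow, Polynomial.map_ofNat, map_ofNat]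
          <;> ring
      rw [hr]
      have h2 : (3 + 2 * X : (ZMod 5)[X]).degree ≤ 1 := by compute_degree!
      have h3 : (X ^ 2 + C (3 : ZMod 5) * X + C 3 : (ZMod 5)[X]).degree = 2 := by
        compute_degree!
      rw [h3]
      exact lt_of_le_of_lt h2 (by decide)
  · have hg : (X ^ 2 + C (3 : ZMod 5) * X + C 4 : (ZMod 5)[X]) = (4 + 3 * X + X ^ 2 : ℤ[X]).map φ5 := by
      simp [Polynomial.map_add, Polynomial.map_mul, Polynomial.map_pow, Polynomial.map_ofNat, map_ofNat]
      <;> ring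
    have h5 : BZ = (4 + 3 * X + X ^ 2) * (4 + 3 * X + X ^ 2 + X ^ 3) + (3 + X) + 5 * ((-3) + (-5) * X + (-3) * X ^ 2 + (-2) * X ^ 3) := by
      unfold BZ; ring
    refine notDvdOfRem (f := BZ.map φ5) (q := (4 + 3 * X + X ^ 2 + X ^ 3 : ℤ[X]).map φ5)
      (r := (3 + X : ℤ[X]).map φ5) (by rw [hg]; exact mapRem5 h5) ?_ ?_
    · have hr : ((3 + X : ℤ[X]).map φ5) = 3 + X := by
        simp [Polynomial.map_add, Polynomial.map_mul, Polynomial.map_pow, Polynomial.map_ofNat, map_ofNat]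
          <;> ring
      rw [hr]
      intro h0
      have h2 := congrArg (eval 0) h0
      simp only [eval_add, eval_mul, eval_X, eval_one, eval_pow, eval_ofNat, eval_zero] at h2
      exact absurd h2 (by decide)
    · have hr : ((3 + X : ℤ[X]).map φ5) = 3 + X := by
        simp [Polynomial.map_add, Polynomial.map_mul, Polynomial.map_pow, Polynomial.map_ofNat, map_ofNat]
          <;> ring
      rw [hr]
      have h2 : (3 + X : (ZMod 5)[X]).degree ≤ 1 := by compute_degree!
      have h3 : (X ^ 2 + C (3 : ZMod 5) * X + C 4 : (ZMod 5)[X]).degree = 2 := by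
        compute_degree!
      rw [h3]
      exact lt_of_le_of_lt h2 (by decide)
  · have hg : (X ^ 2 + C (4 : ZMod 5) * X + C 1 : (ZMod 5)[X]) = (1 + 4 * X + X ^ 2 : ℤ[X]).map φ5 := by
      simp [Polynomial.map_add, Polynomial.map_mul, Polynomial.map_pow, Polynomial.map_ofNat, map_ofNat]
      <;> ring
    have h5 : BZ = (1 + 4 * X + X ^ 2) * (1 + 4 * X + X ^ 3) + (3 + 2 * X) + 5 * ((-2) * X + (-3) * X ^ 2 + (-1) * X ^ 3) := by
      unfold BZ; ring
    refine notDvdOfRem (f := BZ.map φ5) (q := (1 + 4 * X + X ^ 3 : ℤ[X]).map φ5)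
      (r := (3 + 2 * X : ℤ[X]).map φ5) (by rw [hg]; exact mapRem5 h5) ?_ ?_
    · have hr : ((3 + 2 * X : ℤ[X]).map φ5) = 3 + 2 * X := by
        simp [Polynomial.map_add, Polynomial.map_mul, Polynomial.map_pow, Polynomial.map_ofNat, map_ofNat]
          <;> ring
      rw [hr]
      intro h0
      have h2 := congrArg (eval 0) h0
      simp only [eval_add, eval_mul, eval_X, eval_one, eval_pow, eval_ofNat, eval_zero] at h2
      exact absurd h2 (by decide)
    · have hr : ((3 + 2 * X : ℤ[X]).map φ5) = 3 + 2 * X := by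
        simp [Polynomial.map_add, Polynomial.map_mul, Polynomial.map_pow, Polynomial.map_ofNat, map_ofNat]
          <;> ring
      rw [hr]
      have h2 : (3 + 2 * X : (ZMod 5)[X]).degree ≤ 1 := by compute_degree!
      have h3 : (X ^ 2 + C (4 : ZMod 5) * X + C 1 : (ZMod 5)[X]).degree = 2 := by
        compute_degree!
      rw [h3]
      exact lt_of_le_of_lt h2 (by decide)
  · have hg : (X ^ 2 + C (4 : ZMod 5) * X + C 2 : (ZMod 5)[X]) = (2 + 4 * X + X ^ 2 : ℤ[X]).map φ5 := by
      simp [Polynomial.map_add, Polynomial.map_mul, Polynomial.map_pow, Polynomial.map_ofNat, map_ofNat]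
      <;> ring
    have h5 : BZ = (2 + 4 * X + X ^ 2) * (3 * X + X ^ 3) + (4 + 4 * X) + 5 * ((-2) * X + (-2) * X ^ 2 + (-1) * X ^ 3) := by
      unfold BZ; ring
    refine notDvdOfRem (f := BZ.map φ5) (q := (3 * X + X ^ 3 : ℤ[X]).map φ5)
      (r := (4 + 4 * X : ℤ[X]).map φ5) (by rw [hg]; exact mapRem5 h5) ?_ ?_
    · have hr : ((4 + 4 * X : ℤ[X]).map φ5) = 4 + 4 * X := by
        simp [Polynomial.map_add, Polynomial.map_mul, Polynomial.map_pow, Polynomial.map_ofNat, map_ofNat]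
          <;> ring
      rw [hr]
      intro h0
      have h2 := congrArg (eval 0) h0
      simp only [eval_add, eval_mul, eval_X, eval_one, eval_pow, eval_ofNat, eval_zero] at h2
      exact absurd h2 (by decide)
    · have hr : ((4 + 4 * X : ℤ[X]).map φ5) = 4 + 4 * X := by
        simp [Polynomial.map_add, Polynomial.map_mul, Polynomial.map_pow, Polynomial.map_ofNat, map_ofNat]
          <;> ring
      rw [hr]
      have h2 : (4 + 4 * X : (ZMod 5)[X]).degree ≤ 1 := by compute_degree!
      have h3 : (X ^ 2 + C (4 : ZMod 5) * X + C 2 : (ZMod 5)[X]).degree = 2 := by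
        compute_degree!
      rw [h3]
      exact lt_of_le_of_lt h2 (by decide)

lemma EZbarQuad : ∀ b c : ZMod 2, (∀ x, x ^ 2 + b * x + c ≠ 0) →
    ¬ (X ^ 2 + C b * X + C c ∣ EZ.map φ2) := by
  intro b c hrf
  have key : ∀ b c : ZMod 2, (∀ x, x ^ 2 + b * x + c ≠ 0) →
      (b = 1 ∧ c = 1) := by decide
  rcases key b c hrf with ⟨rfl, rfl⟩
  · have hg : (X ^ 2 + C (1 : ZMod 2) * X + C 1 : (ZMod 2)[X]) = (1 + X + X ^ 2 : ℤ[X]).map φ2 := by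
      simp [Polynomial.map_add, Polynomial.map_mul, Polynomial.map_pow, Polynomial.map_ofNat, map_ofNat]
      <;> ring
    have h5 : EZ = (1 + X + X ^ 2) * (X ^ 2) + (1 + X) + 2 * (0) := by
      unfold EZ; ring
    refine notDvdOfRem (f := EZ.map φ2) (q := (X ^ 2 : ℤ[X]).map φ2)
      (r := (1 + X : ℤ[X]).map φ2) (by rw [hg]; exact mapRem2 h5) ?_ ?_
    · have hr : ((1 + X : ℤ[X]).map φ2) = 1 + X := by
        simp [Polynomial.map_add, Polynomial.map_mul, Polynomial.map_pow, Polynomial.map_ofNat, map_ofNat]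
          <;> ring
      rw [hr]
      intro h0
      have h2 := congrArg (eval 0) h0
      simp only [eval_add, eval_mul, eval_X, eval_one, eval_pow, eval_ofNat, eval_zero] at h2
      exact absurd h2 (by decide)
    · have hr : ((1 + X : ℤ[X]).map φ2) = 1 + X := by
        simp [Polynomial.map_add, Polynomial.map_mul, Polynomial.map_pow, Polynomial.map_ofNat, map_ofNat]
          <;> ring
      rw [hr]
      have h2 : (1 + X : (ZMod 2)[X]).degree ≤ 1 := by compute_degree!
      have h3 : (X ^ 2 + C (1 : ZMod 2) * X + C 1 : (ZMod 2)[X]).degree = 2 := by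
        compute_degree!
      rw [h3]
      exact lt_of_le_of_lt h2 (by decide)

-- ## Irreducibility of all factors

lemma AbarIrr : Irreducible (AZ.map φ5) :=
  irreducibleOfCert (AZmonic.map φ5) (Or.inr AbarDeg) AbarRootFree AZbarQuad
lemma BbarIrr : Irreducible (BZ.map φ5) :=
  irreducibleOfCert (BZmonic.map φ5) (Or.inr BbarDeg) BbarRootFree BZbarQuad
lemma CbarIrr : Irreducible (CZ.map φ2) :=
  irreducibleOfDeg3 (CZmonic.map φ2) CbarDeg CbarRootFree
lemma DbarIrr : Irreducible (DZ.map φ2) :=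
  irreducibleOfDeg3 (DZmonic.map φ2) DbarDeg DbarRootFree
lemma EbarIrr : Irreducible (EZ.map φ2) :=
  irreducibleOfCert (EZmonic.map φ2) (Or.inl EbarDeg) EbarRootFree EZbarQuad

-- ## Factorization of weilQ2 modulo 5 and 2

lemma fact5 : weilQ2.map φ5 = AZ.map φ5 * BZ.map φ5 := by
  rw [← Polynomial.map_mul]
  exact mapEq5 (f := weilQ2) (g := AZ * BZ) (s := 11809 + (-7874) * X + 3353 * X ^ 2 + (-1234) * X ^ 3 + 397 * X ^ 4 + (-110) * X ^ 5 + 44 * X ^ 6 + (-18) * X ^ 7 + 4 * X ^ 8 + (-2) * X ^ 9)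
    (by unfold weilQ2 AZ BZ; ring)

lemma fact2 : weilQ2.map φ2 = CZ.map φ2 * (DZ.map φ2 * EZ.map φ2) := by
  rw [← Polynomial.map_mul, ← Polynomial.map_mul]
  exact mapEq2 (f := weilQ2) (g := CZ * (DZ * EZ)) (s := 29524 + (-19684) * X + 8382 * X ^ 2 + (-3081) * X ^ 3 + 991 * X ^ 4 + (-271) * X ^ 5 + 107 * X ^ 6 + (-41) * X ^ 7 + 10 * X ^ 8 + (-4) * X ^ 9)
    (by unfold weilQ2 CZ DZ EZ; ring)

lemma deg5Bar {x : (ZMod 5)[X]} (hx : x ∣ weilQ2.map φ5) :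
    x.natDegree = 0 ∨ x.natDegree = 5 ∨ x.natDegree = 10 := by
  rw [fact5] at hx
  have h := dvdIrredMul AbarIrr BbarIrr hx
  rw [AbarDeg, BbarDeg] at h
  omega

lemma deg2Bar {x : (ZMod 2)[X]} (hx : x ∣ weilQ2.map φ2) : x.natDegree ≠ 5 := by
  rw [fact2] at hx
  have h := dvdIrredMul3 CbarIrr DbarIrr EbarIrr hx
  rw [CbarDeg, DbarDeg, EbarDeg] at h
  omega

-- ## weilQ2 basic facts

lemma weilQ2monic : weilQ2.Monic := by unfold weilQ2; monicity!
lemma weilQ2natDeg : weilQ2.natDegree = 10 := by unfold weilQ2; compute_degree!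
lemma weilQ2coeff9 : weilQ2.coeff 9 = -6 := by
  unfold weilQ2; norm_num [coeff_X_pow, coeff_ofNat_mul, coeff_X]
lemma weilQ2coeff8 : weilQ2.coeff 8 = 23 := by
  unfold weilQ2; norm_num [coeff_X_pow, coeff_ofNat_mul, coeff_X]

-- ## Irreducibility over ℤ

lemma weilQ2IrrZ : Irreducible weilQ2 := by
  constructor
  · intro hu
    have := natDegree_eq_zero_of_isUnit hu
    rw [weilQ2natDeg] at this
    exact absurd this (by norm_num)
  · intro a b hab
    by_contra hcon
    push_neg at hcon
    obtain ⟨hua, hub⟩ := hcon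
    have hf0 : weilQ2 ≠ 0 := weilQ2monic.ne_zero
    have ha0 : a ≠ 0 := by rintro rfl; simp at hab; exact hf0 hab
    have hb0 : b ≠ 0 := by rintro rfl; simp at hab; exact hf0 hab
    have hlc : a.leadingCoeff * b.leadingCoeff = 1 := by
      rw [← leadingCoeff_mul, ← hab]
      exact weilQ2monic
    have hunits := Int.eq_one_or_neg_one_of_mul_eq_one' hlc
    have hla5 : φ5 a.leadingCoeff ≠ 0 := by
      rcases hunits with ⟨h1, _⟩ | ⟨h1, _⟩ <;> rw [h1] <;> decide
    have hla2 : φ2 a.leadingCoeff ≠ 0 := by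
      rcases hunits with ⟨h1, _⟩ | ⟨h1, _⟩ <;> rw [h1] <;> decide
    have hadvd : a ∣ weilQ2 := ⟨b, hab⟩
    have h5 := deg5Bar (Polynomial.map_dvd φ5 hadvd)
    have h2 := deg2Bar (Polynomial.map_dvd φ2 hadvd)
    rw [natDegree_map_of_leadingCoeff_ne_zero φ5 hla5] at h5
    rw [natDegree_map_of_leadingCoeff_ne_zero φ2 hla2] at h2
    have hsum : a.natDegree + b.natDegree = 10 := by
      rw [← weilQ2natDeg, hab, natDegree_mul ha0 hb0]
    have hna : a.natDegree = 0 ∨ b.natDegree = 0 := by omega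
    rcases hna with hna | hnb
    · apply hua
      rw [eq_C_of_natDegree_eq_zero hna]
      apply isUnit_C.mpr
      have hcoe : a.coeff 0 = a.leadingCoeff := by
        rw [Polynomial.leadingCoeff, hna]
      rw [hcoe]
      rcases hunits with ⟨h1, _⟩ | ⟨h1, _⟩ <;> rw [h1]
      · exact isUnit_one
      · exact isUnit_one.neg
    · apply hub
      have hlb2 : IsUnit b.leadingCoeff := by
        rcases hunits with ⟨_, h1⟩ | ⟨_, h1⟩ <;> rw [h1]
        · exact isUnit_one
        · exact isUnit_one.neg
      rw [eq_C_of_natDegree_eq_zero hnb]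
      apply isUnit_C.mpr
      have hcoe : b.coeff 0 = b.leadingCoeff := by
        rw [Polynomial.leadingCoeff, hnb]
      rw [hcoe]
      exact hlb2

/-- `Q₂(T)` is irreducible over `ℚ`, and there is no `g ∈ ℤ[T]` and no integer `k ≥ 2`
with `Q₂(T) = g(T^k)`. -/
theorem weilQ2_irreducible_and_not_in_ZTk :
    Irreducible (weilQ2.map (Int.castRingHom ℚ)) ∧
      ∀ (g : Polynomial ℤ) (k : ℕ), 2 ≤ k → weilQ2 ≠ Polynomial.expand ℤ k g := by
  constructor
  · exact (Polynomial.IsPrimitive.Int.irreducible_iff_irreducible_map_cast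
      weilQ2monic.isPrimitive).mp weilQ2IrrZ
  · intro g k hk h
    have hk0 : 0 < k := by omega
    have h9 : weilQ2.coeff 9 = (Polynomial.expand ℤ k g).coeff 9 := by rw [h]
    have h8 : weilQ2.coeff 8 = (Polynomial.expand ℤ k g).coeff 8 := by rw [h]
    rw [Polynomial.coeff_expand hk0, weilQ2coeff9] at h9
    rw [Polynomial.coeff_expand hk0, weilQ2coeff8] at h8
    by_cases hd : k ∣ 9
    · have hd8 : ¬ k ∣ 8 := by
        have hk9 : k ≤ 9 := Nat.le_of_dvd (by norm_num) hd
        interval_cases k <;> omega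
      rw [if_neg hd8] at h8
      norm_num at h8
    · rw [if_neg hd] at h9
      norm_num at h9
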